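/- Let f be a topological flow on a closed topological n-manifold M and let p be a topologically hyperbolic fixed point of f of index λ, with neighborhood U_p and conjugating homeomorphism h_p : U_p → ℝ^n, h_p(p) = 0. Set E^s_λ = {x ∈ ℝ^n : x_1 = … = x_λ = 0} and E^u_λ = {x ∈ ℝ^n : x_{λ+1} = … = x_n = 0}. Then ⋃_{t∈ℝ} f(t, h_p^{-1}(E^s_λ)) = {y ∈ M : f(t,y) → p as t → +∞} and ⋃_{t∈ℝ} f(t, h_p^{-1}(E^u_λ)) = {y ∈ M : f(−t,y) → p as t → +∞}. -/

import Mathlib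

open Filter Topology Set

/-- The model linear flow `a^t_λ` on `ℝ^n`. -/
noncomputable def modelFlow (n lam : ℕ) (t : ℝ) (x : Fin n → ℝ) : Fin n → ℝ :=
  fun i => if (i : ℕ) < lam then (2 : ℝ) ^ t * x i else (2 : ℝ) ^ (-t) * x i

/-- An `ε`-chain of length `T` from `x` to `y` for the flow `f`. -/
def IsEpsChain {M : Type*} [MetricSpace M] (f : ℝ → M → M) (ε T : ℝ) (x y : M) : Prop :=
  ∃ (m : ℕ) (xs : ℕ → M) (ts : ℕ → ℝ), 0 < m ∧ xs 0 = x ∧ xs m = y ∧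
    (∀ i ∈ Finset.Icc 1 m, 1 ≤ ts i ∧ dist (f (ts i) (xs (i - 1))) (xs i) < ε) ∧
    ∑ i ∈ Finset.Icc 1 m, ts i = T

/-- A point is chain recurrent if for every `ε > 0` there is an `ε`-chain of some
length `T` from the point to itself. -/
def IsChainRecurrent {M : Type*} [MetricSpace M] (f : ℝ → M → M) (x : M) : Prop :=
  ∀ ε > 0, ∃ T > 0, IsEpsChain f ε T x x

/-- The stable manifold `W^s_p`. -/
def stableSet {M : Type*} [TopologicalSpace M] (f : ℝ → M → M) (p : M) : Set M :=
  {y | Tendsto (fun t : ℝ => f t y) atTop (nhds p)}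

/-- The unstable manifold `W^u_p`. -/
def unstableSet {M : Type*} [TopologicalSpace M] (f : ℝ → M → M) (p : M) : Set M :=
  {y | Tendsto (fun t : ℝ => f (-t) y) atTop (nhds p)}

/-- `p` is a topologically hyperbolic fixed point of index `lam` of the flow `f`. -/
def IsTopHyperbolicFixedPt {M : Type*} [TopologicalSpace M] (n : ℕ) (f : ℝ → M → M)
    (p : M) (lam : ℕ) : Prop :=
  lam ≤ n ∧ (∀ t : ℝ, f t p = p) ∧
  ∃ (U : Set M) (_ : IsOpen U) (hp : p ∈ U) (h : U ≃ₜ (Fin n → ℝ)),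
    h ⟨p, hp⟩ = 0 ∧
    ∀ (t : ℝ) (y : M) (hy : y ∈ U) (hfy : ∀ s ∈ Set.uIcc (0 : ℝ) t, f s y ∈ U),
      (h ⟨f t y, hfy t Set.right_mem_uIcc⟩ : Fin n → ℝ) = modelFlow n lam t (h ⟨y, hy⟩)

/-- `p` is a regular point of `φ` (in the sense of continuous Morse theory). -/
def IsRegularPoint {M : Type*} [TopologicalSpace M] (n : ℕ) (φ : M → ℝ) (p : M) : Prop :=
  ∃ (V : Set M) (_ : IsOpen V) (hp : p ∈ V) (ψ : V ≃ₜ (Fin n → ℝ)) (j : Fin n),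
    (j : ℕ) + 1 = n ∧ ψ ⟨p, hp⟩ = 0 ∧ ∀ y : V, φ y = φ p + ψ y j

/-- `p` is a non-degenerate critical point of `φ` of index `ν`. -/
def IsNondegenerateCriticalPoint {M : Type*} [TopologicalSpace M] (n : ℕ) (φ : M → ℝ)
    (p : M) (ν : ℕ) : Prop :=
  ν ≤ n ∧ ¬ IsRegularPoint n φ p ∧
  ∃ (V : Set M) (_ : IsOpen V) (hp : p ∈ V) (ψ : V ≃ₜ (Fin n → ℝ)),
    ψ ⟨p, hp⟩ = 0 ∧
    ∀ y : V, φ y = φ p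
      - ∑ i ∈ Finset.univ.filter (fun i : Fin n => (i : ℕ) < ν), (ψ y i) ^ 2
      + ∑ i ∈ Finset.univ.filter (fun i : Fin n => ν ≤ (i : ℕ)), (ψ y i) ^ 2

/-- `M` is locally Euclidean of dimension `n` (every point has a neighborhood
homeomorphic to `ℝ^n`). -/
def LocallyEuclidean (n : ℕ) (M : Type*) [TopologicalSpace M] : Prop :=
  ∀ p : M, ∃ U : Set M, IsOpen U ∧ p ∈ U ∧ Nonempty (U ≃ₜ (Fin n → ℝ))


lemma two_rpow_neg_tendsto : Tendsto (fun t : ℝ => (2:ℝ) ^ (-t)) atTop (𝓝 0) :=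
  (tendsto_rpow_atBot_of_base_gt_one 2 one_lt_two).comp tendsto_neg_atTop_atBot

lemma key {M : Type*} [MetricSpace M] (n : ℕ)
    (f : ℝ → M → M)
    (hf_cont : Continuous fun q : ℝ × M => f q.1 q.2)
    (hf_zero : ∀ x, f 0 x = x)
    (hf_add : ∀ s t : ℝ, ∀ x, f t (f s x) = f (t + s) x)
    (p : M) (U : Set M) (hU : IsOpen U) (hpU : p ∈ U) (h : U ≃ₜ (Fin n → ℝ))
    (hp0 : h ⟨p, hpU⟩ = 0)
    (P : Fin n → Prop) [DecidablePred P]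
    (hconj : ∀ (t : ℝ) (ht : 0 ≤ t) (y : M) (hy : y ∈ U)
      (hfy : ∀ s ∈ Set.Icc (0:ℝ) t, f s y ∈ U),
      (h ⟨f t y, hfy t (Set.right_mem_Icc.2 ht)⟩ : Fin n → ℝ)
        = fun i => if P i then (2:ℝ) ^ t * (h ⟨y, hy⟩) i
            else (2:ℝ) ^ (-t) * (h ⟨y, hy⟩) i) :
    (⋃ t : ℝ, f t '' (Subtype.val ''
        (h.symm '' {x : Fin n → ℝ | ∀ i : Fin n, P i → x i = 0})))
      = stableSet f p := by
  have hcz : ∀ z : M, Continuous fun t : ℝ => f t z := fun z =>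
    hf_cont.comp (continuous_id.prodMk continuous_const)
  -- Step A: points in the local stable set are in the global stable set
  have hmain : ∀ (z : M) (hzU : z ∈ U), (∀ i, P i → (h ⟨z, hzU⟩) i = 0) →
      z ∈ stableSet f p := by
    intro z hzU hzE
    set x : Fin n → ℝ := h ⟨z, hzU⟩ with hx
    set v : ℝ → (Fin n → ℝ) := fun t i => (2:ℝ) ^ (-t) * x i with hv
    have hv_cont : Continuous v := by
      refine continuous_pi fun i => ?_
      exact (continuous_const.rpow continuous_neg fun _ => Or.inl two_ne_zero).mul
        continuous_const
    have hvz : ∀ (t : ℝ) (ht : 0 ≤ t) (hfy : ∀ s ∈ Set.Icc (0:ℝ) t, f s z ∈ U),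
        (h ⟨f t z, hfy t (Set.right_mem_Icc.2 ht)⟩ : Fin n → ℝ) = v t := by
      intro t ht hfy
      rw [hconj t ht z hzU hfy]
      funext i
      by_cases hi : P i
      · have e : x i = 0 := hzE i hi
        have e' : (h ⟨z, hzU⟩) i = 0 := e
        simp [hi, e, e', v]
      · simp [hi, v, hx]
    have hval : ∀ (t : ℝ) (ht : 0 ≤ t) (hfy : ∀ s ∈ Set.Icc (0:ℝ) t, f s z ∈ U),
        f t z = ↑(h.symm (v t)) := by
      intro t ht hfy
      have h1 := hvz t ht hfy
      have h2 : (⟨f t z, hfy t (Set.right_mem_Icc.2 ht)⟩ : U) = h.symm (v t) := by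
        rw [← h1, Homeomorph.symm_apply_apply]
      exact congrArg Subtype.val h2
    have hU_all : ∀ t : ℝ, 0 ≤ t → f t z ∈ U := by
      by_contra hcon
      push_neg at hcon
      obtain ⟨t₀, ht₀, ht₀U⟩ := hcon
      have hC_closed : IsClosed (Ici (0:ℝ) ∩ (fun t => f t z) ⁻¹' Uᶜ) :=
        isClosed_Ici.inter (hU.isClosed_compl.preimage (hcz z))
      have hC_ne : (Ici (0:ℝ) ∩ (fun t => f t z) ⁻¹' Uᶜ).Nonempty := ⟨t₀, ht₀, ht₀U⟩
      have hC_bdd : BddBelow (Ici (0:ℝ) ∩ (fun t => f t z) ⁻¹' Uᶜ) :=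
        ⟨0, fun t ht => ht.1⟩
      set T := sInf (Ici (0:ℝ) ∩ (fun t => f t z) ⁻¹' Uᶜ) with hT
      have hTC : T ∈ Ici (0:ℝ) ∩ (fun t => f t z) ⁻¹' Uᶜ :=
        hC_closed.csInf_mem hC_ne hC_bdd
      have hT0 : 0 < T := by
        rcases lt_or_eq_of_le (show (0:ℝ) ≤ T from hTC.1) with h' | h'
        · exact h'
        · exfalso
          apply hTC.2
          show f T z ∈ U
          rw [← h', hf_zero]
          exact hzU
      have hlt : ∀ s : ℝ, 0 ≤ s → s < T → f s z ∈ U := by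
        intro s hs hsT
        by_contra hns
        exact absurd (csInf_le hC_bdd ⟨hs, hns⟩) (not_le.2 hsT)
      have hseg : ∀ t : ℝ, 0 ≤ t → t < T → ∀ s ∈ Set.Icc (0:ℝ) t, f s z ∈ U :=
        fun t ht htT s hs => hlt s hs.1 (lt_of_le_of_lt hs.2 htT)
      have h1 : Tendsto (fun t => f t z) (𝓝[<] T) (𝓝 (f T z)) :=
        ((hcz z).tendsto T).mono_left nhdsWithin_le_nhds
      have h2 : Tendsto (fun t => (↑(h.symm (v t)) : M)) (𝓝[<] T)
          (𝓝 ↑(h.symm (v T))) := by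
        have : Continuous fun t : ℝ => (↑(h.symm (v t)) : M) :=
          continuous_subtype_val.comp (h.symm.continuous.comp hv_cont)
        exact (this.tendsto T).mono_left nhdsWithin_le_nhds
      have heq : (fun t => f t z) =ᶠ[𝓝[<] T] fun t => ↑(h.symm (v t)) := by
        filter_upwards [Ioo_mem_nhdsLT_of_mem (⟨hT0, le_refl T⟩ : T ∈ Set.Ioc 0 T)]
          with t ht
        exact hval t ht.1.le (hseg t ht.1.le ht.2)
      have hfl : f T z = ↑(h.symm (v T)) :=
        tendsto_nhds_unique h1 (h2.congr' heq.symm)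
      apply hTC.2
      show f T z ∈ U
      rw [hfl]
      exact (h.symm (v T)).2
    have hsegAll : ∀ t : ℝ, 0 ≤ t → ∀ s ∈ Set.Icc (0:ℝ) t, f s z ∈ U :=
      fun t ht s hs => hU_all s hs.1
    -- limit
    have hv0 : Tendsto v atTop (𝓝 0) := by
      rw [tendsto_pi_nhds]
      intro i
      have := two_rpow_neg_tendsto.mul_const (x i)
      simpa using this
    have hsymm0 : (↑(h.symm 0) : M) = p := by
      rw [← hp0, Homeomorph.symm_apply_apply]
    have hlim : Tendsto (fun t => (↑(h.symm (v t)) : M)) atTop (𝓝 p) := by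
      rw [← hsymm0]
      exact ((continuous_subtype_val.comp h.symm.continuous).tendsto 0).comp hv0
    apply hlim.congr'
    filter_upwards [eventually_ge_atTop (0:ℝ)] with t ht
    exact (hval t ht (hsegAll t ht)).symm
  apply Set.Subset.antisymm
  · intro y hy
    simp only [Set.mem_iUnion, Set.mem_image] at hy
    obtain ⟨t, _, ⟨u, ⟨x0, hx0E, rfl⟩, rfl⟩, rfl⟩ := hy
    have hzU : (↑(h.symm x0) : M) ∈ U := (h.symm x0).2
    have hzE : ∀ i, P i → (h ⟨↑(h.symm x0), hzU⟩ : Fin n → ℝ) i = 0 := by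
      intro i hi
      have e : (⟨↑(h.symm x0), hzU⟩ : U) = h.symm x0 := Subtype.ext rfl
      rw [e, Homeomorph.apply_symm_apply]
      exact hx0E i hi
    have hz := hmain _ hzU hzE
    have htd : Tendsto (fun s : ℝ => f (s + t) (↑(h.symm x0) : M)) atTop (𝓝 p) :=
      hz.comp (tendsto_atTop_add_const_right atTop t tendsto_id)
    show Tendsto (fun s : ℝ => f s (f t (↑(h.symm x0) : M))) atTop (𝓝 p)
    exact htd.congr fun s => (hf_add t s _).symm
  · intro y hy
    set V : Set M := Subtype.val '' (h.symm '' Metric.ball (0 : Fin n → ℝ) 1) with hVdef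
    have hVopen : IsOpen V :=
      hU.isOpenMap_subtype_val _ (h.symm.isOpenMap _ Metric.isOpen_ball)
    have hVsub : V ⊆ U := by
      rintro w ⟨u, -, rfl⟩; exact u.2
    have hpV : p ∈ V := by
      refine ⟨⟨p, hpU⟩, ⟨0, Metric.mem_ball_self one_pos, ?_⟩, rfl⟩
      rw [← hp0, Homeomorph.symm_apply_apply]
    have hev : ∀ᶠ t in atTop, f t y ∈ V := hy.eventually (hVopen.mem_nhds hpV)
    obtain ⟨S0, hS0⟩ := eventually_atTop.1 hev
    set S := max S0 0 with hSdef
    have hSnn : (0:ℝ) ≤ S := le_max_right _ _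
    have hforward : ∀ t : ℝ, 0 ≤ t → f t (f S y) ∈ V := by
      intro t ht
      rw [hf_add S t y]
      exact hS0 _ (le_trans (le_max_left _ _) (by linarith))
    have hzU : f S y ∈ U := by
      have h0 := hforward 0 le_rfl
      rw [hf_zero] at h0
      exact hVsub h0
    have hU' : ∀ t : ℝ, 0 ≤ t → ∀ s ∈ Set.Icc (0:ℝ) t, f s (f S y) ∈ U :=
      fun t ht s hs => hVsub (hforward s hs.1)
    have hnorm : ∀ (w : M) (hw : w ∈ V) (hwU : w ∈ U),
        ‖(h ⟨w, hwU⟩ : Fin n → ℝ)‖ < 1 := by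
      rintro w ⟨u, ⟨b, hb, rfl⟩, hw⟩ hwU
      have e : (⟨w, hwU⟩ : U) = h.symm b := Subtype.ext hw.symm
      rw [e, Homeomorph.apply_symm_apply]
      simpa [Metric.mem_ball, dist_zero_right] using hb
    have hxE : ∀ i, P i → (h ⟨f S y, hzU⟩ : Fin n → ℝ) i = 0 := by
      intro i hi
      have hb : ∀ t : ℝ, 0 ≤ t → |(h ⟨f S y, hzU⟩ : Fin n → ℝ) i| ≤ (2:ℝ) ^ (-t) := by
        intro t ht
        have hmem := hnorm (f t (f S y)) (hforward t ht) (hU' t ht t (Set.right_mem_Icc.2 ht))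
        have hc := hconj t ht (f S y) hzU (hU' t ht)
        have h1 : |(2:ℝ) ^ t * (h ⟨f S y, hzU⟩ : Fin n → ℝ) i| < 1 := by
          have h2 : (h ⟨f t (f S y), hU' t ht t (Set.right_mem_Icc.2 ht)⟩ : Fin n → ℝ) i
              = (2:ℝ) ^ t * (h ⟨f S y, hzU⟩ : Fin n → ℝ) i := by
            rw [hc]; simp [hi]
          calc |(2:ℝ) ^ t * (h ⟨f S y, hzU⟩ : Fin n → ℝ) i|
              = ‖(h ⟨f t (f S y), hU' t ht t (Set.right_mem_Icc.2 ht)⟩ : Fin n → ℝ) i‖ := by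
                rw [h2, Real.norm_eq_abs]
            _ ≤ ‖(h ⟨f t (f S y), hU' t ht t (Set.right_mem_Icc.2 ht)⟩ : Fin n → ℝ)‖ :=
                norm_le_pi_norm _ i
            _ < 1 := hmem
        have hpow : (0:ℝ) < (2:ℝ) ^ t := Real.rpow_pos_of_pos (by norm_num) t
        rw [abs_mul, abs_of_pos hpow] at h1
        rw [Real.rpow_neg (by norm_num : (0:ℝ) ≤ 2), ← one_div]
        exact (le_div_iff₀' hpow).2 h1.le
      have h0 : |(h ⟨f S y, hzU⟩ : Fin n → ℝ) i| ≤ 0 := by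
        refine ge_of_tendsto two_rpow_neg_tendsto ?_
        filter_upwards [eventually_ge_atTop (0:ℝ)] with t ht
        exact hb t ht
      exact abs_nonpos_iff.mp h0
    refine Set.mem_iUnion.2 ⟨-S, ?_⟩
    refine ⟨f S y, ⟨⟨f S y, hzU⟩, ⟨h ⟨f S y, hzU⟩, hxE, Homeomorph.symm_apply_apply _ _⟩, rfl⟩, ?_⟩
    rw [hf_add S (-S) y, neg_add_cancel, hf_zero]

/-- The saturation under the flow of the local stable (resp. unstable)
set `h⁻¹(E^s_λ)` (resp. `h⁻¹(E^u_λ)`) of a topologically hyperbolic fixed point equals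
the global stable (resp. unstable) manifold. -/
theorem stmt5 {M : Type*} [MetricSpace M] [CompactSpace M] (n : ℕ)
    (hM : LocallyEuclidean n M)
    (f : ℝ → M → M)
    (hf_cont : Continuous fun q : ℝ × M => f q.1 q.2)
    (hf_zero : ∀ x, f 0 x = x)
    (hf_add : ∀ s t : ℝ, ∀ x, f t (f s x) = f (t + s) x)
    (p : M) (lam : ℕ) (hlam : lam ≤ n)
    (hfix : ∀ t : ℝ, f t p = p)
    (U : Set M) (hU : IsOpen U) (hpU : p ∈ U) (h : U ≃ₜ (Fin n → ℝ))
    (hp0 : h ⟨p, hpU⟩ = 0)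
    (hconj : ∀ (t : ℝ) (y : M) (hy : y ∈ U) (hfy : ∀ s ∈ Set.uIcc (0 : ℝ) t, f s y ∈ U),
      (h ⟨f t y, hfy t Set.right_mem_uIcc⟩ : Fin n → ℝ) = modelFlow n lam t (h ⟨y, hy⟩)) :
    (⋃ t : ℝ, f t '' (Subtype.val ''
        (h.symm '' {x : Fin n → ℝ | ∀ i : Fin n, (i : ℕ) < lam → x i = 0})))
      = stableSet f p ∧
    (⋃ t : ℝ, f t '' (Subtype.val ''
        (h.symm '' {x : Fin n → ℝ | ∀ i : Fin n, lam ≤ (i : ℕ) → x i = 0})))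
      = unstableSet f p := by
  constructor
  · refine key n f hf_cont hf_zero hf_add p U hU hpU h hp0
      (fun i : Fin n => (i : ℕ) < lam) ?_
    intro t ht y hy hfy
    have hfy' : ∀ s ∈ Set.uIcc (0:ℝ) t, f s y ∈ U := by
      intro s hs
      rw [Set.uIcc_of_le ht] at hs
      exact hfy s hs
    exact hconj t y hy hfy'
  · have hg_cont : Continuous fun q : ℝ × M => f (-q.1) q.2 :=
      hf_cont.comp ((continuous_fst.neg).prodMk continuous_snd)
    have hg_zero : ∀ x, f (-(0:ℝ)) x = x := by
      intro x; rw [neg_zero]; exact hf_zero x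
    have hg_add : ∀ s t : ℝ, ∀ x, f (-t) (f (-s) x) = f (-(t + s)) x := by
      intro s t x; rw [hf_add, neg_add]
    have hgconj : ∀ (t : ℝ) (ht : 0 ≤ t) (y : M) (hy : y ∈ U)
        (hfy : ∀ s ∈ Set.Icc (0:ℝ) t, f (-s) y ∈ U),
        (h ⟨f (-t) y, hfy t (Set.right_mem_Icc.2 ht)⟩ : Fin n → ℝ)
          = fun i : Fin n => if lam ≤ (i : ℕ) then (2:ℝ) ^ t * (h ⟨y, hy⟩) i
              else (2:ℝ) ^ (-t) * (h ⟨y, hy⟩) i := by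
      intro t ht y hy hfy
      have hfy' : ∀ s ∈ Set.uIcc (0:ℝ) (-t), f s y ∈ U := by
        intro s hs
        rw [Set.uIcc_of_ge (neg_nonpos.mpr ht)] at hs
        have e : f s y = f (-(-s)) y := by rw [neg_neg]
        rw [e]
        exact hfy (-s) ⟨neg_nonneg.2 hs.2, by linarith [hs.1]⟩
      have hc := hconj (-t) y hy hfy'
      refine Eq.trans ?_ (hc.trans ?_)
      · rfl
      · funext i
        simp only [modelFlow]
        rcases lt_or_ge (i : ℕ) lam with hlt | hge
        · rw [if_pos hlt, if_neg (not_le.2 hlt)]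
        · rw [if_neg (not_lt.2 hge), if_pos hge, neg_neg]
    have hkey2 := key n (fun t x => f (-t) x) hg_cont hg_zero hg_add p U hU hpU h hp0
      (fun i : Fin n => lam ≤ (i : ℕ)) hgconj
    have hsets : (⋃ t : ℝ, f t '' (Subtype.val ''
          (h.symm '' {x : Fin n → ℝ | ∀ i : Fin n, lam ≤ (i : ℕ) → x i = 0})))
        = ⋃ t : ℝ, (fun x => f (-t) x) '' (Subtype.val ''
          (h.symm '' {x : Fin n → ℝ | ∀ i : Fin n, lam ≤ (i : ℕ) → x i = 0})) := by
      ext w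
      simp only [Set.mem_iUnion]
      constructor
      · rintro ⟨t, hw⟩
        exact ⟨-t, by simpa [neg_neg] using hw⟩
      · rintro ⟨t, hw⟩
        exact ⟨-t, hw⟩
    have hun : stableSet (fun t x => f (-t) x) p = unstableSet f p := rfl
    rw [hsets]
    exact hkey2.trans hun
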